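/- Let K be a field of characteristic different from 2 and let a, b, c be nonzero elements of K. Then the quadratic form ⟨⟨a,b⟩⟩ ⊥ ⟨⟨a,c⟩⟩ ⊥ ⟨⟨a,bc⟩⟩ ⊥ H² (of dimension 16) is equivalent to ⟨⟨a,b,c⟩⟩ ⊥ ⟨⟨a,bc,−1⟩⟩ (of dimension 16). (This is the equidimensional form of the Witt-ring computation ⟨⟨a,b⟩⟩ + ⟨⟨a,c⟩⟩ + ⟨⟨a,bc⟩⟩ = ⟨⟨a,b,c⟩⟩ + 2·⟨⟨a,bc⟩⟩ carried out in Lemma 3.1 of the paper.) -/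
import Mathlib

open QuadraticMap

/-- The `m`-fold Pfister form `⟨⟨a₁,…,a_m⟩⟩`: the diagonal quadratic form of dimension `2^m`
whose entries are the products `∏_{i ∈ S} (−a_i)` over all subsets `S` of `{1,…,m}`,
here modeled with subsets `S : Fin m → Bool`. -/
noncomputable def pfister (K : Type*) [Field K] {m : ℕ} (a : Fin m → K) :
    QuadraticForm K ((Fin m → Bool) → K) :=
  weightedSumSquares K (fun S : Fin m → Bool => ∏ i : Fin m, if S i then -a i else 1)

/-- `H^m`: the orthogonal sum of `m` copies of the hyperbolic plane `⟨1, −1⟩`. -/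
noncomputable def hypPlanes (K : Type*) [Field K] (m : ℕ) :
    QuadraticForm K (Fin m × Fin 2 → K) :=
  weightedSumSquares K (fun p : Fin m × Fin 2 => if p.2 = 0 then (1 : K) else -1)

section Aux

variable {K : Type*} [Field K]

/-- Reindexing a weighted sum of squares along an equivalence of index types. -/
theorem wss_reindex {ι₁ ι₂ : Type*} [Fintype ι₁] [Fintype ι₂] (e : ι₁ ≃ ι₂)
    {w₁ : ι₁ → K} {w₂ : ι₂ → K} (h : ∀ i, w₁ i = w₂ (e i)) :
    (weightedSumSquares K w₁).Equivalent (weightedSumSquares K w₂) := by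
  refine ⟨{ toLinearEquiv := LinearEquiv.funCongrLeft K K e.symm, map_app' := fun f => ?_ }⟩
  rw [weightedSumSquares_apply, weightedSumSquares_apply]
  refine (Fintype.sum_equiv e _ _ fun i => ?_).symm
  simp [LinearMap.funLeft, h i]

/-- A weighted sum of squares over a sum type is the product of the two pieces. -/
theorem wss_sum {ι₁ ι₂ : Type*} [Fintype ι₁] [Fintype ι₂] (u : ι₁ → K) (v : ι₂ → K) :
    (weightedSumSquares K (Sum.elim u v)).Equivalent
      ((weightedSumSquares K u).prod (weightedSumSquares K v)) := by
  refine ⟨{ toLinearEquiv := LinearEquiv.sumArrowLequivProdArrow ι₁ ι₂ K K,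
            map_app' := fun f => ?_ }⟩
  simp [weightedSumSquares_apply, LinearEquiv.sumArrowLequivProdArrow, Fintype.sum_sum_type]

/-- `⟨1, -1⟩` is equivalent to `⟨d, -d⟩` for `d ≠ 0` (char ≠ 2). -/
theorem wss_hyp (h2 : (2 : K) ≠ 0) {d : K} (hd : d ≠ 0) :
    (weightedSumSquares K ![(1 : K), -1]).Equivalent (weightedSumSquares K ![d, -d]) := by
  refine ⟨{ toFun := fun f => ![(f 0 + f 1)/(2*d) + (f 0 - f 1)/2,
                                (f 0 + f 1)/(2*d) - (f 0 - f 1)/2],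
            invFun := fun g => ![d*(g 0 + g 1)/2 + (g 0 - g 1)/2,
                                 d*(g 0 + g 1)/2 - (g 0 - g 1)/2],
            map_add' := by intro x y; funext i; fin_cases i <;> simp <;> ring
            map_smul' := by intro r x; funext i; fin_cases i <;> simp [smul_eq_mul] <;> ring
            left_inv := by intro f; funext i; fin_cases i <;> (simp; field_simp; ring)
            right_inv := by intro g; funext i; fin_cases i <;> (simp; field_simp; ring)
            map_app' := fun f => ?_ }⟩
  simp only [weightedSumSquares_apply, Fin.sum_univ_two, Matrix.cons_val_zero,
    Matrix.cons_val_one, Matrix.head_cons, smul_eq_mul]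
  field_simp
  ring

end Aux

/-- The index type of the left-hand side form. -/
abbrev TL : Type := (Fin 2 → Bool) ⊕ ((Fin 2 → Bool) ⊕ ((Fin 2 → Bool) ⊕ (Fin 2 ⊕ Fin 2)))

/-- The index type of the right-hand side form. -/
abbrev TR : Type := (Fin 3 → Bool) ⊕ (Fin 3 → Bool)

def sigmaFun : TL → TR
  | .inl S => .inl ![S 0, S 1, false]
  | .inr (.inl S) => if S 1 then .inl ![S 0, false, true] else .inr ![S 0, false, true]
  | .inr (.inr (.inl S)) => .inr ![S 0, S 1, false]
  | .inr (.inr (.inr (.inl j))) =>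
      if j = 0 then .inl ![false, true, true] else .inr ![false, true, true]
  | .inr (.inr (.inr (.inr j))) =>
      if j = 0 then .inr ![true, true, true] else .inl ![true, true, true]

def tauFun : TR → TL
  | .inl S =>
      if S 2 then
        (if S 1 then (if S 0 then .inr (.inr (.inr (.inr 1))) else .inr (.inr (.inr (.inl 0))))
         else .inr (.inl ![S 0, true]))
      else .inl ![S 0, S 1]
  | .inr S =>
      if S 2 then
        (if S 1 then (if S 0 then .inr (.inr (.inr (.inr 0))) else .inr (.inr (.inr (.inl 1))))
         else .inr (.inl ![S 0, false]))
      else .inr (.inr (.inl ![S 0, S 1]))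

/-- The matching between the diagonal entries of the two sides. -/
def sigmaEquiv : TL ≃ TR where
  toFun := sigmaFun
  invFun := tauFun
  left_inv := by
    rintro (S | S | S | j | j)
    · cases h0 : S 0 <;> cases h1 : S 1 <;> simp [sigmaFun, tauFun, h0, h1] <;>
        (funext i; fin_cases i <;> simp [h0, h1])
    · cases h0 : S 0 <;> cases h1 : S 1 <;> simp [sigmaFun, tauFun, h0, h1] <;>
        (funext i; fin_cases i <;> simp [h0, h1])
    · cases h0 : S 0 <;> cases h1 : S 1 <;> simp [sigmaFun, tauFun, h0, h1] <;>
        (funext i; fin_cases i <;> simp [h0, h1])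
    · fin_cases j <;> rfl
    · fin_cases j <;> rfl
  right_inv := by
    rintro (S | S)
    · cases h0 : S 0 <;> cases h1 : S 1 <;> cases h2 : S 2 <;>
        simp [sigmaFun, tauFun, h0, h1, h2] <;>
        (funext i; fin_cases i <;> simp [h0, h1, h2])
    · cases h0 : S 0 <;> cases h1 : S 1 <;> cases h2 : S 2 <;>
        simp [sigmaFun, tauFun, h0, h1, h2] <;>
        (funext i; fin_cases i <;> simp [h0, h1, h2])

/-- Splitting `H²`'s index set into its two planes. -/
def eH : (Fin 2 ⊕ Fin 2) ≃ Fin 2 × Fin 2 where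
  toFun := Sum.elim (fun j => (0, j)) (fun j => (1, j))
  invFun := fun p => if p.1 = 0 then Sum.inl p.2 else Sum.inr p.2
  left_inv := by decide
  right_inv := by decide

/-- `⟨⟨a,b⟩⟩ ⊥ ⟨⟨a,c⟩⟩ ⊥ ⟨⟨a,bc⟩⟩ ⊥ H² ≃ ⟨⟨a,b,c⟩⟩ ⊥ ⟨⟨a,bc,−1⟩⟩`. -/
theorem stmt_2 {K : Type*} [Field K] (hchar : ringChar K ≠ 2)
    (a b c : K) (ha : a ≠ 0) (hb : b ≠ 0) (hc : c ≠ 0) :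
    QuadraticMap.Equivalent
      ((pfister K ![a, b]).prod ((pfister K ![a, c]).prod
        ((pfister K ![a, b * c]).prod (hypPlanes K 2))))
      ((pfister K ![a, b, c]).prod (pfister K ![a, b * c, -1])) := by
  have h2 : (2 : K) ≠ 0 := Ring.two_ne_zero hchar
  have hbc : b * c ≠ 0 := mul_ne_zero hb hc
  have habc : a * b * c ≠ 0 := mul_ne_zero (mul_ne_zero ha hb) hc
  unfold pfister hypPlanes
  set wab := fun S : Fin 2 → Bool => ∏ i : Fin 2, if S i then -(![a, b] i) else 1 with hwab
  set wac := fun S : Fin 2 → Bool => ∏ i : Fin 2, if S i then -(![a, c] i) else 1 with hwac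
  set wabc := fun S : Fin 2 → Bool => ∏ i : Fin 2, if S i then -(![a, b * c] i) else 1 with hwabc
  set w1 := fun S : Fin 3 → Bool => ∏ i : Fin 3, if S i then -(![a, b, c] i) else 1 with hw1
  set w2 := fun S : Fin 3 → Bool => ∏ i : Fin 3, if S i then -(![a, b * c, -1] i) else 1 with hw2
  -- step 1: replace H² by ⟨bc, -bc⟩ ⊥ ⟨abc, -abc⟩
  have hH : (weightedSumSquares K
        (fun p : Fin 2 × Fin 2 => if p.2 = 0 then (1 : K) else -1)).Equivalent
      ((weightedSumSquares K ![b * c, -(b * c)]).prod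
        (weightedSumSquares K ![a * b * c, -(a * b * c)])) := by
    refine ((wss_reindex eH (w₁ := Sum.elim ![(1:K), -1] ![(1:K), -1]) ?_).symm).trans
      ((wss_sum _ _).trans ((wss_hyp h2 hbc).prod (wss_hyp h2 habc)))
    rintro (j | j) <;> fin_cases j <;> simp [eH]
  -- step 2: collapse the left side to a single weighted sum of squares
  set WL : TL → K := Sum.elim wab (Sum.elim wac (Sum.elim wabc
      (Sum.elim ![b * c, -(b * c)] ![a * b * c, -(a * b * c)]))) with hWL
  have eL : (weightedSumSquares K WL).Equivalent
      ((weightedSumSquares K wab).prod ((weightedSumSquares K wac).prod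
        ((weightedSumSquares K wabc).prod
          ((weightedSumSquares K ![b * c, -(b * c)]).prod
            (weightedSumSquares K ![a * b * c, -(a * b * c)]))))) :=
    (wss_sum _ _).trans ((Equivalent.refl _).prod ((wss_sum _ _).trans
      ((Equivalent.refl _).prod ((wss_sum _ _).trans
        ((Equivalent.refl _).prod (wss_sum _ _))))))
  -- step 3: the right side
  set WR : TR → K := Sum.elim w1 w2 with hWR
  have eR : (weightedSumSquares K WR).Equivalent
      ((weightedSumSquares K w1).prod (weightedSumSquares K w2)) := wss_sum _ _
  -- step 4: the permutation
  have hperm : ∀ i : TL, WL i = WR (sigmaEquiv i) := by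
    rintro (S | S | S | j | j)
    · cases h0 : S 0 <;> cases h1 : S 1 <;>
        simp [hWL, hWR, hwab, hw1, sigmaEquiv, sigmaFun, Fin.prod_univ_two,
          Fin.prod_univ_three, h0, h1]
    · cases h0 : S 0 <;> cases h1 : S 1 <;>
        simp [hWL, hWR, hwac, hw1, hw2, sigmaEquiv, sigmaFun, Fin.prod_univ_two,
          Fin.prod_univ_three, h0, h1]
    · cases h0 : S 0 <;> cases h1 : S 1 <;>
        simp [hWL, hWR, hwabc, hw2, sigmaEquiv, sigmaFun, Fin.prod_univ_two,
          Fin.prod_univ_three, h0, h1]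
    · fin_cases j <;>
        simp [hWL, hWR, hw1, hw2, sigmaEquiv, sigmaFun, Fin.prod_univ_three] <;> ring
    · fin_cases j <;>
        simp [hWL, hWR, hw1, hw2, sigmaEquiv, sigmaFun, Fin.prod_univ_three] <;> ring
  exact ((Equivalent.refl _).prod ((Equivalent.refl _).prod
      ((Equivalent.refl _).prod hH))).trans
    (eL.symm.trans ((wss_reindex sigmaEquiv hperm).trans eR))
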